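/- Let B = [[a, c],[b, d]] be a 2×2 matrix with entries in ℤ ⊆ ℤ[i], det B ≠ 0, and gcd(a,c) = 1 over ℤ. Then the set D = {(0, α + iα') : α, α' ∈ ℤ, 0 ≤ α, α' < |det B|} is a complete set of coset representatives of ℤ[i]² / B ℤ[i]². -/
import Mathlib


local notation "ℤ[i]" => GaussianInt

/-- For `B = [[a,c],[b,d]]` with integer entries, `det B ≠ 0` and
`gcd a c = 1` over `ℤ`, the set `D = {(0, α + iα') : 0 ≤ α, α' < |det B|}` is a
complete set of coset representatives of `ℤ[i]² / B ℤ[i]²`. -/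
theorem coset_representatives_int (a b c d : ℤ) (hΔ : a * d - b * c ≠ 0)
    (hgcd : Int.gcd a c = 1) :
    let D : Set (ℤ[i] × ℤ[i]) :=
      {δ | δ.1 = 0 ∧ ∃ α α' : ℤ, 0 ≤ α ∧ α < |a * d - b * c| ∧ 0 ≤ α' ∧ α' < |a * d - b * c| ∧
        δ.2 = ⟨α, α'⟩}
    let S : Set (ℤ[i] × ℤ[i]) :=
      {w | ∃ v : ℤ[i] × ℤ[i], w = ((a : ℤ[i]) * v.1 + (c : ℤ[i]) * v.2,
        (b : ℤ[i]) * v.1 + (d : ℤ[i]) * v.2)}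
    ∀ w : ℤ[i] × ℤ[i], ∃! δ : ℤ[i] × ℤ[i], δ ∈ D ∧ (w.1 - δ.1, w.2 - δ.2) ∈ S := by
  intro D S w
  -- Bezout coefficients
  obtain ⟨x, y, hbez⟩ : ∃ x y : ℤ, a * x + c * y = 1 := by
    refine ⟨Int.gcdA a c, Int.gcdB a c, ?_⟩
    have h := Int.gcd_eq_gcd_ab a c
    rw [hgcd] at h
    push_cast at h
    linarith
  have hbez' : (a : ℤ[i]) * (x : ℤ[i]) + (c : ℤ[i]) * (y : ℤ[i]) = 1 := by
    exact_mod_cast congrArg (fun n : ℤ => (n : ℤ[i])) hbez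
  set Δ : ℤ := a * d - b * c with hΔdef
  set e : ℤ := b * x + d * y with hedef
  have hΔ' : (Δ : ℤ[i]) = (a : ℤ[i]) * d - (b : ℤ[i]) * c := by push_cast [hΔdef]; ring
  have he' : (e : ℤ[i]) = (b : ℤ[i]) * x + (d : ℤ[i]) * y := by push_cast [hedef]; ring
  -- membership criterion for S
  have key : ∀ t : ℤ[i] × ℤ[i], t ∈ S ↔ (Δ : ℤ[i]) ∣ (t.2 - (e : ℤ[i]) * t.1) := by
    intro t
    constructor
    · rintro ⟨v, hv⟩
      refine ⟨(x : ℤ[i]) * v.2 - (y : ℤ[i]) * v.1, ?_⟩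
      have h1 : t.1 = (a : ℤ[i]) * v.1 + (c : ℤ[i]) * v.2 := by rw [hv]
      have h2 : t.2 = (b : ℤ[i]) * v.1 + (d : ℤ[i]) * v.2 := by rw [hv]
      rw [h1, h2, hΔ', he']
      linear_combination (-(b : ℤ[i]) * v.1 - (d : ℤ[i]) * v.2) * hbez'
    · rintro ⟨u, hu⟩
      refine ⟨((x : ℤ[i]) * t.1 - (c : ℤ[i]) * u, (y : ℤ[i]) * t.1 + (a : ℤ[i]) * u), ?_⟩
      have := hu
      rw [hΔ', he'] at this
      refine Prod.ext ?_ ?_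
      · simp only
        linear_combination (-t.1) * hbez'
      · simp only
        linear_combination this
  set M : ℤ := |Δ| with hMdef
  have hM0 : 0 < M := abs_pos.mpr hΔ
  have hΔM : Δ ∣ M := (dvd_abs Δ Δ).mpr dvd_rfl
  set z : ℤ[i] := w.2 - (e : ℤ[i]) * w.1 with hzdef
  set α : ℤ := z.re % M with hαdef
  set α' : ℤ := z.im % M with hα'def
  refine ⟨(0, ⟨α, α'⟩), ⟨⟨rfl, α, α', Int.emod_nonneg _ (ne_of_gt hM0),
    Int.emod_lt_of_pos _ hM0, Int.emod_nonneg _ (ne_of_gt hM0),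
    Int.emod_lt_of_pos _ hM0, rfl⟩, ?_⟩, ?_⟩
  · -- existence: (w.1 - 0, w.2 - ⟨α,α'⟩) ∈ S
    rw [key]
    simp only [sub_zero]
    have hre : Δ ∣ (w.2 - (⟨α, α'⟩ : ℤ[i]) - (e : ℤ[i]) * w.1).re := by
      have : (w.2 - (⟨α, α'⟩ : ℤ[i]) - (e : ℤ[i]) * w.1).re = z.re - α := by
        simp only [hzdef, Zsqrtd.re_sub]
        ring
      rw [this]
      exact dvd_trans hΔM ⟨z.re / M, by have h := Int.mul_ediv_add_emod z.re M; rw [hαdef]; omega⟩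
    have him : Δ ∣ (w.2 - (⟨α, α'⟩ : ℤ[i]) - (e : ℤ[i]) * w.1).im := by
      have : (w.2 - (⟨α, α'⟩ : ℤ[i]) - (e : ℤ[i]) * w.1).im = z.im - α' := by
        simp only [hzdef, Zsqrtd.im_sub]
        ring
      rw [this]
      exact dvd_trans hΔM ⟨z.im / M, by have h := Int.mul_ediv_add_emod z.im M; rw [hα'def]; omega⟩
    exact (Zsqrtd.intCast_dvd (d := -1) Δ _).mpr ⟨hre, him⟩
  · -- uniqueness
    rintro δ' ⟨⟨h1, β, β', hβ0, hβM, hβ'0, hβ'M, h2⟩, hS⟩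
    rw [key] at hS
    simp only [h1, sub_zero] at hS
    have hdvd : (Δ : ℤ[i]) ∣ z - δ'.2 := by
      have : z - δ'.2 = w.2 - δ'.2 - (e : ℤ[i]) * w.1 := by rw [hzdef]; ring
      rw [this]
      convert hS using 1
    rw [h2] at hdvd
    rw [Zsqrtd.intCast_dvd] at hdvd
    obtain ⟨hre, him⟩ := hdvd
    have hre' : M ∣ z.re - β := by
      have : z.re - β = (z - (⟨β, β'⟩ : ℤ[i])).re := by simp [Zsqrtd.re_sub]
      rw [this, hMdef]
      exact (abs_dvd Δ _).mpr hre
    have him' : M ∣ z.im - β' := by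
      have : z.im - β' = (z - (⟨β, β'⟩ : ℤ[i])).im := by simp [Zsqrtd.im_sub]
      rw [this, hMdef]
      exact (abs_dvd Δ _).mpr him
    have hβ : β = α := by
      have h3 : β % M = α := Int.modEq_iff_dvd.mpr hre'
      rwa [Int.emod_eq_of_lt hβ0 hβM] at h3
    have hβ' : β' = α' := by
      have h3 : β' % M = α' := Int.modEq_iff_dvd.mpr him'
      rwa [Int.emod_eq_of_lt hβ'0 hβ'M] at h3
    refine Prod.ext ?_ ?_
    · simp [h1]
    · simp [h2, hβ, hβ']
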